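/- For real z and ω ∈ (0, 2π), the absolute value of μ(z) = sinh((π−ω)(z+i/2))/sinh(π(z+i/2)) satisfies |μ(z)|² = (sinh²((π−ω)z)cos²((π−ω)/2) + cosh²((π−ω)z)sin²((π−ω)/2)) / cosh²(πz), and |μ(z)| < 1 for all real z. -/

import Mathlib

open Real Complex

lemma sinh_decomp (θ z : ℝ) :
    Complex.sinh ((θ : ℂ) * (z + Complex.I / 2)) =
      (Real.sinh (θ * z) * Real.cos (θ / 2) : ℝ) +
        (Real.cosh (θ * z) * Real.sin (θ / 2) : ℝ) * Complex.I := by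
  have h : (θ : ℂ) * (z + Complex.I / 2) = ((θ * z : ℝ) : ℂ) + ((θ / 2 : ℝ) : ℂ) * Complex.I := by
    push_cast; ring
  rw [h, Complex.sinh_add, Complex.sinh_mul_I, Complex.cosh_mul_I]
  push_cast
  ring

lemma abs_sinh_sq (θ z : ℝ) :
    ‖Complex.sinh ((θ : ℂ) * (z + Complex.I / 2))‖ ^ 2 =
      Real.sinh (θ * z) ^ 2 * Real.cos (θ / 2) ^ 2 +
        Real.cosh (θ * z) ^ 2 * Real.sin (θ / 2) ^ 2 := by
  rw [sinh_decomp, Complex.sq_norm, Complex.normSq_add_mul_I]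
  ring

/-- For real `z` and `ω ∈ (0, 2π)`, the modulus of
`μ(z) = sinh((π−ω)(z+i/2))/sinh(π(z+i/2))` satisfies
`|μ(z)|² = (sinh²((π−ω)z)cos²((π−ω)/2) + cosh²((π−ω)z)sin²((π−ω)/2))/cosh²(πz)`
and `|μ(z)| < 1`. -/
theorem stmt12 (ω : ℝ) (hω : ω ∈ Set.Ioo (0 : ℝ) (2 * Real.pi)) (z : ℝ) :
    (‖Complex.sinh (((Real.pi : ℂ) - ω) * (z + Complex.I / 2)) /
        Complex.sinh ((Real.pi : ℂ) * (z + Complex.I / 2))‖) ^ 2 =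
      (Real.sinh ((Real.pi - ω) * z) ^ 2 * Real.cos ((Real.pi - ω) / 2) ^ 2 +
          Real.cosh ((Real.pi - ω) * z) ^ 2 * Real.sin ((Real.pi - ω) / 2) ^ 2) /
        Real.cosh (Real.pi * z) ^ 2 ∧
    ‖Complex.sinh (((Real.pi : ℂ) - ω) * (z + Complex.I / 2)) /
        Complex.sinh ((Real.pi : ℂ) * (z + Complex.I / 2))‖ < 1 := by
  obtain ⟨hω0, hω2⟩ := hω
  have hcast : ((Real.pi : ℂ) - ω) = ((Real.pi - ω : ℝ) : ℂ) := by push_cast; ring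
  have hden : ‖Complex.sinh ((Real.pi : ℂ) * (z + Complex.I / 2))‖ ^ 2 =
      Real.cosh (Real.pi * z) ^ 2 := by
    have h := abs_sinh_sq Real.pi z
    rw [Real.cos_pi_div_two, Real.sin_pi_div_two] at h
    rw [h]; ring
  have hformula : (‖Complex.sinh (((Real.pi : ℂ) - ω) * (z + Complex.I / 2)) /
        Complex.sinh ((Real.pi : ℂ) * (z + Complex.I / 2))‖) ^ 2 =
      (Real.sinh ((Real.pi - ω) * z) ^ 2 * Real.cos ((Real.pi - ω) / 2) ^ 2 +
          Real.cosh ((Real.pi - ω) * z) ^ 2 * Real.sin ((Real.pi - ω) / 2) ^ 2) /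
        Real.cosh (Real.pi * z) ^ 2 := by
    rw [norm_div, div_pow, hden, hcast, abs_sinh_sq]
  refine ⟨hformula, ?_⟩
  -- strict inequality
  have hcoshpos : 0 < Real.cosh (Real.pi * z) := Real.cosh_pos _
  have hnum : Real.sinh ((Real.pi - ω) * z) ^ 2 * Real.cos ((Real.pi - ω) / 2) ^ 2 +
      Real.cosh ((Real.pi - ω) * z) ^ 2 * Real.sin ((Real.pi - ω) / 2) ^ 2 <
      Real.cosh (Real.pi * z) ^ 2 := by
    have hsinhle : Real.sinh ((Real.pi - ω) * z) ^ 2 ≤ Real.sinh (Real.pi * z) ^ 2 := by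
      have h1 : |Real.sinh ((Real.pi - ω) * z)| ≤ |Real.sinh (Real.pi * z)| := by
        rw [Real.abs_sinh, Real.abs_sinh]
        apply Real.sinh_le_sinh.2
        rw [abs_mul, abs_mul]
        apply mul_le_mul_of_nonneg_right _ (abs_nonneg z)
        rw [abs_le]
        constructor <;> [skip; skip] <;>
          · rw [abs_of_pos Real.pi_pos] <;> linarith
      calc Real.sinh ((Real.pi - ω) * z) ^ 2 = |Real.sinh ((Real.pi - ω) * z)| ^ 2 := (_root_.sq_abs _).symm
        _ ≤ |Real.sinh (Real.pi * z)| ^ 2 := by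
            apply pow_le_pow_left₀ (abs_nonneg _) h1
        _ = Real.sinh (Real.pi * z) ^ 2 := _root_.sq_abs _
    have hsin : Real.sin ((Real.pi - ω) / 2) ^ 2 < 1 := by
      have hc : 0 < Real.cos ((Real.pi - ω) / 2) := by
        apply Real.cos_pos_of_mem_Ioo
        rw [Set.mem_Ioo]
        constructor <;> linarith [Real.pi_pos]
      nlinarith [Real.sin_sq_add_cos_sq ((Real.pi - ω) / 2)]
    have hc2 := Real.sin_sq_add_cos_sq ((Real.pi - ω) / 2)
    have hcosh1 : Real.cosh ((Real.pi - ω) * z) ^ 2 = Real.sinh ((Real.pi - ω) * z) ^ 2 + 1 :=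
      Real.cosh_sq _
    have hcosh2 : Real.cosh (Real.pi * z) ^ 2 = Real.sinh (Real.pi * z) ^ 2 + 1 :=
      Real.cosh_sq _
    nlinarith
  rw [show (1 : ℝ) = 1 ^ 2 by norm_num] at *
  have habs := hformula
  have : (‖Complex.sinh (((Real.pi : ℂ) - ω) * (z + Complex.I / 2)) /
      Complex.sinh ((Real.pi : ℂ) * (z + Complex.I / 2))‖) ^ 2 < 1 := by
    rw [habs, div_lt_one (by positivity)]
    exact hnum
  nlinarith [norm_nonneg (Complex.sinh (((Real.pi : ℂ) - ω) * (z + Complex.I / 2)) /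
      Complex.sinh ((Real.pi : ℂ) * (z + Complex.I / 2)))]
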